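/- Let m, k be integers with m ≥ 5 and 2 ≤ k ≤ ⌊(m-1)/2⌋. Then 3^m - 3^{m-1} - 2^k·C(m-1, k) > Σ_{j=1}^{k} 2^j·C(m, j). (That is, the minimum distance of the code C_{ḡ_{(m,k)}} exceeds the minimum distance Σ_{j=1}^{k} 2^j·C(m, j) of the code C_{g_{(m,k)}} constructed by Heng, Ding and Zhou.) -/

import Mathlib

open Finset

lemma half_sum_aux (m k : ℕ) (h : 2 * k + 1 ≤ m) :
    ∑ j ∈ range (k + 1), m.choose j ≤ 2 ^ (m - 1) := by
  have h2 : ∑ j ∈ Icc (m - k) m, m.choose j = ∑ j ∈ range (k + 1), m.choose j := by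
    refine Finset.sum_nbij' (fun j => m - j) (fun j => m - j) ?_ ?_ ?_ ?_ ?_ <;>
      intro a ha <;> simp only [mem_Icc, mem_range] at * <;> try dsimp only
    · omega
    · omega
    · omega
    · omega
    · rw [Nat.choose_symm (by omega)]
  have hdisj : Disjoint (range (k + 1)) (Icc (m - k) m) := by
    rw [Finset.disjoint_left]
    intro a ha hb
    simp only [mem_Icc, mem_range] at *; omega
  have hsub : range (k + 1) ∪ Icc (m - k) m ⊆ range (m + 1) := by
    intro a ha
    simp only [mem_union, mem_Icc, mem_range] at *; omega
  have key : 2 * ∑ j ∈ range (k + 1), m.choose j ≤ 2 ^ m := by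
    calc 2 * ∑ j ∈ range (k + 1), m.choose j
        = ∑ j ∈ range (k + 1), m.choose j + ∑ j ∈ Icc (m - k) m, m.choose j := by
          rw [h2]; ring
      _ = ∑ j ∈ range (k + 1) ∪ Icc (m - k) m, m.choose j := (Finset.sum_union hdisj).symm
      _ ≤ ∑ j ∈ range (m + 1), m.choose j := Finset.sum_le_sum_of_subset hsub
      _ = 2 ^ m := Nat.sum_range_choose m
  have hm1 : 2 ^ m = 2 * 2 ^ (m - 1) := by
    rw [← pow_succ']
    congr 1
    omega
  omega

lemma pow_bound (m k : ℕ) (hm : 2 ≤ m) (h : 2 * k ≤ m - 1) :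
    2 ^ (m - 1 + k) < 3 ^ (m - 1) := by
  have hsq : (2 ^ (m - 1 + k)) ^ 2 < (3 ^ (m - 1)) ^ 2 := by
    rw [← pow_mul, ← pow_mul]
    calc 2 ^ ((m - 1 + k) * 2) ≤ 2 ^ (3 * (m - 1)) := Nat.pow_le_pow_right (by norm_num) (by omega)
      _ = 8 ^ (m - 1) := by rw [pow_mul]; norm_num
      _ < 9 ^ (m - 1) := Nat.pow_lt_pow_left (by norm_num) (by omega)
      _ = 3 ^ ((m - 1) * 2) := by rw [mul_comm, pow_mul]; norm_num
  exact lt_of_pow_lt_pow_left₀ 2 (by positivity) hsq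

theorem stmt_5 (m k : ℕ) (hm : 5 ≤ m) (hk2 : 2 ≤ k) (hk : k ≤ (m - 1) / 2) :
    ∑ j ∈ Finset.Icc 1 k, (2 : ℤ) ^ j * (m.choose j : ℤ)
      < (3 : ℤ) ^ m - 3 ^ (m - 1) - 2 ^ k * ((m - 1).choose k : ℤ) := by
  have hk' : 2 * k ≤ m - 1 := by omega
  have hnat : (∑ j ∈ Finset.Icc 1 k, 2 ^ j * m.choose j) + 3 ^ (m - 1)
      + 2 ^ k * (m - 1).choose k < 3 ^ m := by
    have hT : ∑ j ∈ Finset.Icc 1 k, 2 ^ j * m.choose j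
        ≤ 2 ^ k * ∑ j ∈ range (k + 1), m.choose j := by
      rw [Finset.mul_sum]
      have step1 : ∑ j ∈ Finset.Icc 1 k, 2 ^ j * m.choose j
          ≤ ∑ j ∈ range (k + 1), 2 ^ j * m.choose j := by
        refine Finset.sum_le_sum_of_subset ?_
        intro a ha; simp only [mem_Icc, mem_range] at *; omega
      refine step1.trans (Finset.sum_le_sum fun j hj => Nat.mul_le_mul_right _
          (Nat.pow_le_pow_right (by norm_num) (by simp only [mem_range] at hj; omega)))
    have hS : ∑ j ∈ range (k + 1), m.choose j ≤ 2 ^ (m - 1) :=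
      half_sum_aux m k (by omega)
    have hC : (m - 1).choose k ≤ 2 ^ (m - 1) := by
      calc (m - 1).choose k ≤ ∑ j ∈ range m, (m - 1).choose j :=
            Finset.single_le_sum (fun i _ => Nat.zero_le _) (mem_range.2 (by omega))
        _ = 2 ^ (m - 1) := by
            rw [show m = (m - 1) + 1 from by omega] -- careful
            exact Nat.sum_range_choose (m - 1)
    have hB : 2 ^ (m - 1 + k) < 3 ^ (m - 1) := pow_bound m k (by omega) hk'
    have e1 : 2 ^ k * ∑ j ∈ range (k + 1), m.choose j ≤ 2 ^ (m - 1 + k) := by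
      rw [pow_add, mul_comm (2 ^ (m-1))]
      exact Nat.mul_le_mul_left _ hS
    have e2 : 2 ^ k * (m - 1).choose k ≤ 2 ^ (m - 1 + k) := by
      rw [pow_add, mul_comm (2 ^ (m-1))]
      exact Nat.mul_le_mul_left _ hC
    have e3 : 3 ^ m = 3 * 3 ^ (m - 1) := by
      rw [← pow_succ']; congr 1; omega
    omega
  have := hnat
  push_cast at this ⊢
  linarith [this]
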